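/- arXiv:math/0508324 — 3 statements merged into one kernel-verified Lean document; each statement's English description precedes it below -/
import Mathlib

section
/- For every k ≥ 1, the tree-depth of the path P_k on k vertices equals ⌈log₂(k+1)⌉. -/
/-- A rooted forest on vertex set `V`, encoded as a partial order in which
the set of ancestors of any vertex is a chain. `le u v` means `u` is an
ancestor of `v` (or `u = v`). -/
structure RootedForest (V : Type*) where
  le : V → V → Prop
  le_refl : ∀ v, le v v
  le_antisymm : ∀ u v, le u v → le v u → u = v
  le_trans : ∀ u v w, le u v → le v w → le u w
  anc_chain : ∀ u v w, le u w → le v w → le u v ∨ le v u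

/-- The height of a vertex: the number of its ancestors, itself included. -/
noncomputable def RootedForest.vheight {V : Type*} (F : RootedForest V) (x : V) : ℕ :=
  Nat.card {y // F.le y x}

/-- The height of a rooted forest: the maximum height of a vertex. -/
noncomputable def RootedForest.height {V : Type*} (F : RootedForest V) : ℕ :=
  ⨆ x : V, F.vheight x

/-- `G` is a subgraph of the closure of `F`: every edge joins comparable vertices. -/
def RootedForest.Supports {V : Type*} (G : SimpleGraph V) (F : RootedForest V) : Prop :=
  ∀ u v, G.Adj u v → F.le u v ∨ F.le v u

/-- The tree-depth of a graph: minimum height of a rooted forest whose closure contains it. -/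
noncomputable def treeDepth {V : Type*} (G : SimpleGraph V) : ℕ :=
  sInf {n | ∃ F : RootedForest V, RootedForest.Supports G F ∧ F.height ≤ n}

/-! ### Auxiliary material -/

namespace TDAux

open Nat

/-- The ancestry relation for the optimal elimination forest of a path, on 1-indexed
naturals: `a` is an ancestor of `b` iff `|a - b| < 2 ^ (v₂ a)`. -/
def anc (a b : ℕ) : Prop := |(a : ℤ) - (b : ℤ)| < 2 ^ (padicValNat 2 a)

lemma dvd_self' (a : ℕ) : (2 : ℤ) ^ (padicValNat 2 a) ∣ (a : ℤ) := by
  have : (2 : ℕ) ^ (padicValNat 2 a) ∣ a := pow_padicValNat_dvd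
  exact_mod_cast Int.natCast_dvd_natCast.mpr this

lemma not_dvd' (a : ℕ) (ha : a ≠ 0) : ¬ (2 : ℤ) ^ (padicValNat 2 a + 1) ∣ (a : ℤ) := by
  intro h
  have h' : (2 : ℕ) ^ (padicValNat 2 a + 1) ∣ a := by exact_mod_cast h
  exact pow_succ_padicValNat_not_dvd ha h'

lemma mult_bound {m x M : ℤ} (hx : m ∣ x) (hM : m ∣ M) (h : |x| < M + m) : |x| ≤ M := by
  by_contra hc
  push_neg at hc
  have h1 : m ∣ |x| - M := dvd_sub ((dvd_abs _ _).2 hx) hM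
  have h2 : m ≤ |x| - M := Int.le_of_dvd (by omega) h1
  omega

lemma mod_pow (a : ℕ) (ha : a ≠ 0) :
    (2 : ℤ) ^ (padicValNat 2 a + 1) ∣ (a : ℤ) - 2 ^ (padicValNat 2 a) := by
  obtain ⟨c, hc⟩ := dvd_self' a
  have hodd : ¬ (2 : ℤ) ∣ c := by
    rintro ⟨d, hd⟩
    exact not_dvd' a ha ⟨d, by rw [hc, hd]; ring⟩
  have hc2 : c % 2 = 1 := by omega
  obtain ⟨d, hd⟩ : ∃ d, c = 2 * d + 1 := ⟨c / 2, by omega⟩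
  exact ⟨d, by rw [hc, hd]; ring⟩

lemma anc_refl (a : ℕ) : anc a a := by
  simp only [anc, sub_self, abs_zero]
  positivity

lemma val_lt_of_anc {a b : ℕ} (hne : a ≠ b) (h : anc a b) : padicValNat 2 b < padicValNat 2 a := by
  by_contra hc
  push_neg at hc
  have hd : (2 : ℤ) ^ (padicValNat 2 a) ∣ (a : ℤ) - b :=
    dvd_sub (dvd_self' a) ((pow_dvd_pow 2 hc).trans (dvd_self' b))
  have h0 : |(a : ℤ) - b| ≤ 0 := mult_bound hd (dvd_zero _) (by rw [zero_add]; exact h)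
  have h1 : (a : ℤ) - b = 0 := abs_eq_zero.mp (le_antisymm h0 (abs_nonneg _))
  exact hne (by exact_mod_cast sub_eq_zero.mp h1)

lemma anc_antisymm {a b : ℕ} (h1 : anc a b) (h2 : anc b a) : a = b := by
  by_contra hc
  exact lt_asymm (val_lt_of_anc hc h1) (val_lt_of_anc (Ne.symm hc) h2)

lemma anc_trans {a b c : ℕ} (h1 : anc a b) (h2 : anc b c) : anc a c := by
  rcases eq_or_ne a b with rfl | hab
  · exact h2
  have hv : padicValNat 2 b < padicValNat 2 a := val_lt_of_anc hab h1
  have hd : (2 : ℤ) ^ (padicValNat 2 b) ∣ (a : ℤ) - b :=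
    dvd_sub ((pow_dvd_pow 2 hv.le).trans (dvd_self' a)) (dvd_self' b)
  have hM : (2 : ℤ) ^ (padicValNat 2 b) ∣
      (2 : ℤ) ^ (padicValNat 2 a) - 2 ^ (padicValNat 2 b) :=
    dvd_sub (pow_dvd_pow 2 hv.le) dvd_rfl
  have h3 : |(a : ℤ) - b| ≤ 2 ^ (padicValNat 2 a) - 2 ^ (padicValNat 2 b) :=
    mult_bound hd hM (by rw [sub_add_cancel]; exact h1)
  have htri := abs_sub_le (a : ℤ) (b : ℤ) (c : ℤ)
  unfold anc at h2 ⊢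
  linarith

/-- Two vertices with the same 2-adic valuation and a common descendant coincide. -/
lemma anc_eq {a b c : ℕ} (ha : a ≠ 0) (hb : b ≠ 0)
    (hv : padicValNat 2 a = padicValNat 2 b) (h1 : anc a c) (h2 : anc b c) : a = b := by
  have hd : (2 : ℤ) ^ (padicValNat 2 a + 1) ∣ (a : ℤ) - b := by
    have hA := mod_pow a ha
    have hB := mod_pow b hb
    rw [← hv] at hB
    have := dvd_sub hA hB
    simpa using this
  have htri := abs_sub_le (a : ℤ) (c : ℤ) (b : ℤ)
  have hcb : |(c : ℤ) - b| = |(b : ℤ) - c| := abs_sub_comm _ _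
  unfold anc at h1 h2
  rw [← hv] at h2
  have habs : |(a : ℤ) - b| < 0 + 2 ^ (padicValNat 2 a + 1) := by
    rw [zero_add, pow_succ]
    linarith
  have h0 : |(a : ℤ) - b| ≤ 0 := mult_bound hd (dvd_zero _) habs
  have h1' : (a : ℤ) - b = 0 := abs_eq_zero.mp (le_antisymm h0 (abs_nonneg _))
  exact_mod_cast sub_eq_zero.mp h1'

/-- If `v₂ b ≤ v₂ a` and both are ancestors of `c`, then `a` is an ancestor of `b`. -/
lemma anc_of_le {a b c : ℕ} (ha : a ≠ 0) (hb : b ≠ 0)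
    (hv : padicValNat 2 b ≤ padicValNat 2 a) (h1 : anc a c) (h2 : anc b c) : anc a b := by
  rcases eq_or_lt_of_le hv with heq | hlt
  · have : a = b := anc_eq ha hb heq.symm h1 h2
    rw [this]; exact anc_refl b
  · have hd : (2 : ℤ) ^ (padicValNat 2 b) ∣ (a : ℤ) - b :=
      dvd_sub ((pow_dvd_pow 2 hlt.le).trans (dvd_self' a)) (dvd_self' b)
    have htri := abs_sub_le (a : ℤ) (c : ℤ) (b : ℤ)
    have hcb : |(c : ℤ) - b| = |(b : ℤ) - c| := abs_sub_comm _ _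
    unfold anc at h1 h2 ⊢
    have habs : |(a : ℤ) - b| < 2 ^ (padicValNat 2 a) + 2 ^ (padicValNat 2 b) := by linarith
    have hle : |(a : ℤ) - b| ≤ 2 ^ (padicValNat 2 a) :=
      mult_bound hd (pow_dvd_pow 2 hlt.le) habs
    rcases lt_or_eq_of_le hle with h | h
    · exact h
    · exfalso
      -- |a - b| = 2 ^ v₂ a forces 2 ^ (v₂ a + 1) ∣ b, contradicting v₂ b < v₂ a
      have hb2 : (2 : ℤ) ^ (padicValNat 2 a + 1) ∣ (b : ℤ) := by
        have hA := mod_pow a ha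
        rcases (abs_eq (by positivity : (0:ℤ) ≤ 2 ^ (padicValNat 2 a))).mp h with hcase | hcase
        · -- a - b = 2 ^ v₂ a, so b = a - 2 ^ v₂ a
          have : (b : ℤ) = (a : ℤ) - 2 ^ (padicValNat 2 a) := by linarith
          rw [this]; exact hA
        · -- b - a = 2 ^ v₂ a, so b = (a - 2 ^ v₂ a) + 2 ^ (v₂ a + 1)
          have : (b : ℤ) = ((a : ℤ) - 2 ^ (padicValNat 2 a)) + 2 ^ (padicValNat 2 a + 1) := by
            rw [pow_succ]; linarith
          rw [this]; exact dvd_add hA dvd_rfl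
      have hb2' : (2 : ℕ) ^ (padicValNat 2 a + 1) ∣ b := by exact_mod_cast hb2
      have : padicValNat 2 a + 1 ≤ padicValNat 2 b := (padicValNat_dvd_iff_le hb).mp hb2'
      omega

lemma anc_chain' {a b c : ℕ} (ha : a ≠ 0) (hb : b ≠ 0) (h1 : anc a c) (h2 : anc b c) :
    anc a b ∨ anc b a := by
  rcases le_total (padicValNat 2 b) (padicValNat 2 a) with hv | hv
  · exact Or.inl (anc_of_le ha hb hv h1 h2)
  · exact Or.inr (anc_of_le hb ha hv h2 h1)

/-- The optimal elimination forest of the path on `Fin k`. -/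
def pathForest (k : ℕ) : RootedForest (Fin k) where
  le x y := anc (x.1 + 1) (y.1 + 1)
  le_refl x := anc_refl _
  le_antisymm x y h1 h2 := Fin.ext (by have := anc_antisymm h1 h2; omega)
  le_trans _ _ _ := anc_trans
  anc_chain _ _ _ h1 h2 := anc_chain' (Nat.succ_ne_zero _) (Nat.succ_ne_zero _) h1 h2

lemma adj_anc (a : ℕ) (ha : a ≠ 0) : anc a (a + 1) ∨ anc (a + 1) a := by
  have habs1 : |(a : ℤ) - ((a : ℤ) + 1)| = 1 := by
    rw [show (a : ℤ) - ((a : ℤ) + 1) = -1 by ring]; simp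
  have habs2 : |((a : ℤ) + 1) - (a : ℤ)| = 1 := by
    rw [show ((a : ℤ) + 1) - (a : ℤ) = 1 by ring]; simp
  rcases Nat.even_or_odd a with he | ho
  · left
    have hdvd : (2 : ℕ) ^ 1 ∣ a := by simpa [pow_one] using he.two_dvd
    have h1 : 1 ≤ padicValNat 2 a := (padicValNat_dvd_iff_le ha).mp hdvd
    unfold anc
    push_cast
    rw [habs1]
    calc (1 : ℤ) < 2 ^ 1 := by norm_num
      _ ≤ 2 ^ (padicValNat 2 a) := pow_le_pow_right₀ (by norm_num) h1
  · right
    have hdvd : (2 : ℕ) ^ 1 ∣ (a + 1) := by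
      simpa [pow_one] using (Nat.even_add_one.mpr (Nat.not_even_iff_odd.mpr ho)).two_dvd
    have h1 : 1 ≤ padicValNat 2 (a + 1) := (padicValNat_dvd_iff_le (Nat.succ_ne_zero a)).mp hdvd
    unfold anc
    push_cast
    rw [habs2]
    calc (1 : ℤ) < 2 ^ 1 := by norm_num
      _ ≤ 2 ^ (padicValNat 2 (a + 1)) := pow_le_pow_right₀ (by norm_num) h1

lemma pathForest_supports (k : ℕ) :
    RootedForest.Supports (SimpleGraph.pathGraph k) (pathForest k) := by
  intro u v hadj
  rw [SimpleGraph.pathGraph_adj] at hadj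
  show anc (u.1 + 1) (v.1 + 1) ∨ anc (v.1 + 1) (u.1 + 1)
  rcases hadj with h | h
  · rw [show v.1 + 1 = (u.1 + 1) + 1 by omega]
    exact adj_anc (u.1 + 1) (Nat.succ_ne_zero _)
  · rw [show u.1 + 1 = (v.1 + 1) + 1 by omega]
    exact (adj_anc (v.1 + 1) (Nat.succ_ne_zero _)).symm

lemma pathForest_vheight_le (k : ℕ) (x : Fin k) :
    (pathForest k).vheight x ≤ Nat.clog 2 (k + 1) := by
  set h := Nat.clog 2 (k + 1) with hh
  have hk2 : k < 2 ^ h := lt_of_lt_of_le (Nat.lt_succ_self k) (Nat.le_pow_clog one_lt_two _)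
  have key : ∀ y : {y : Fin k // (pathForest k).le y x}, padicValNat 2 (y.1.1 + 1) < h := by
    intro y
    have hd : 2 ^ padicValNat 2 (y.1.1 + 1) ≤ y.1.1 + 1 :=
      Nat.le_of_dvd (Nat.succ_pos _) pow_padicValNat_dvd
    have hy : y.1.1 + 1 ≤ k := y.1.2
    have hlt : 2 ^ padicValNat 2 (y.1.1 + 1) < 2 ^ h := by omega
    exact (Nat.pow_lt_pow_iff_right one_lt_two).mp hlt
  have hinj : Function.Injective
      (fun y : {y : Fin k // (pathForest k).le y x} =>
        (⟨padicValNat 2 (y.1.1 + 1), key y⟩ : Fin h)) := by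
    intro y z hyz
    have hv : padicValNat 2 (y.1.1 + 1) = padicValNat 2 (z.1.1 + 1) :=
      congrArg Fin.val hyz
    have heq : y.1.1 + 1 = z.1.1 + 1 :=
      anc_eq (Nat.succ_ne_zero _) (Nat.succ_ne_zero _) hv y.2 z.2
    exact Subtype.ext (Fin.ext (by omega))
  calc (pathForest k).vheight x ≤ Nat.card (Fin h) := Nat.card_le_card_of_injective _ hinj
    _ = h := by simp

lemma pathForest_height_le (k : ℕ) (hk : 1 ≤ k) :
    (pathForest k).height ≤ Nat.clog 2 (k + 1) := by
  have : Nonempty (Fin k) := ⟨⟨0, hk⟩⟩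
  exact ciSup_le (pathForest_vheight_le k)

/-- Restriction of a rooted forest to a subtype. -/
def restrict {V : Type*} (F : RootedForest V) (P : V → Prop) : RootedForest {v // P v} where
  le u v := F.le u.1 v.1
  le_refl v := F.le_refl v.1
  le_antisymm u v h1 h2 := Subtype.ext (F.le_antisymm _ _ h1 h2)
  le_trans _ _ _ := F.le_trans _ _ _
  anc_chain _ _ _ := F.anc_chain _ _ _

/-- Key lower bound: any rooted forest in which consecutive vertices of an injectively
embedded path are comparable has a vertex on the path of height at least `⌈log₂(n+1)⌉`. -/
lemma lower (n : ℕ) : ∀ (V : Type) [Finite V] (F : RootedForest V) (p : Fin n → V),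
    Function.Injective p →
    (∀ (i : ℕ) (h1 : i + 1 < n),
      F.le (p ⟨i, by omega⟩) (p ⟨i + 1, h1⟩) ∨ F.le (p ⟨i + 1, h1⟩) (p ⟨i, by omega⟩)) →
    1 ≤ n → ∃ i : Fin n, Nat.clog 2 (n + 1) ≤ F.vheight (p i) := by
  induction n using Nat.strong_induction_on with
  | _ n IH =>
    intro V _ F p hinj hcomp hn
    have : Nonempty (Fin n) := ⟨⟨0, hn⟩⟩
    -- pick a vertex of the path minimal in the forest order
    obtain ⟨j, hj⟩ := Finite.exists_min (fun i : Fin n => F.vheight (p i))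
    have hmin : ∀ i : Fin n, F.le (p i) (p j) → p i = p j := by
      intro i hle
      by_contra hne
      have hsub : {y : V | F.le y (p i)} ⊂ {y : V | F.le y (p j)} := by
        constructor
        · intro y hy
          exact F.le_trans _ _ _ hy hle
        · intro hcon
          have hjj : p j ∈ {y : V | F.le y (p j)} := F.le_refl _
          have : F.le (p j) (p i) := hcon hjj
          exact hne (F.le_antisymm _ _ hle this)
      have hlt : F.vheight (p i) < F.vheight (p j) := by
        have e1 : F.vheight (p i) = {y : V | F.le y (p i)}.ncard := Nat.card_coe_set_eq _
        have e2 : F.vheight (p j) = {y : V | F.le y (p j)}.ncard := Nat.card_coe_set_eq _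
        rw [e1, e2]
        exact Set.ncard_lt_ncard hsub (Set.toFinite _)
      exact absurd (hj i) (not_le.mpr hlt)
    -- the minimal vertex is an ancestor of every vertex of the path
    have hstep : ∀ i i' : Fin n, F.le (p j) (p i) →
        (F.le (p i) (p i') ∨ F.le (p i') (p i)) → F.le (p j) (p i') := by
      intro i i' hle hc
      rcases hc with hc | hc
      · exact F.le_trans _ _ _ hle hc
      · rcases F.anc_chain (p j) (p i') (p i) hle hc with h | h
        · exact h
        · rw [hmin i' h]; exact F.le_refl _
      -- done
    have hroot : ∀ i : Fin n, F.le (p j) (p i) := by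
      have main : ∀ d : ℕ, ∀ i : Fin n,
          ((i : ℕ) = (j : ℕ) + d ∨ (i : ℕ) + d = (j : ℕ)) → F.le (p j) (p i) := by
        intro d
        induction d with
        | zero =>
          intro i hi
          have : i = j := Fin.ext (by omega)
          rw [this]; exact F.le_refl _
        | succ d ihd =>
          intro i hi
          rcases hi with hi | hi
          · have hlt : (j : ℕ) + d + 1 < n := by omega
            have h0 : F.le (p j) (p ⟨(j : ℕ) + d, by omega⟩) :=
              ihd ⟨(j : ℕ) + d, by omega⟩ (Or.inl rfl)
            have hc := hcomp ((j : ℕ) + d) hlt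
            have : F.le (p j) (p ⟨(j : ℕ) + d + 1, hlt⟩) := hstep _ _ h0 hc
            have hieq : i = ⟨(j : ℕ) + d + 1, hlt⟩ := Fin.ext (by simp; omega)
            rw [hieq]; exact this
          · have hlt : (i : ℕ) + 1 < n := by omega
            have h0 : F.le (p j) (p ⟨(i : ℕ) + 1, hlt⟩) :=
              ihd ⟨(i : ℕ) + 1, hlt⟩ (Or.inr (by simp; omega))
            have hc := hcomp (i : ℕ) hlt
            have hieq : (⟨(i : ℕ), by omega⟩ : Fin n) = i := Fin.ext rfl
            rw [← hieq]
            exact hstep _ _ h0 hc.symm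
      intro i
      rcases le_total (j : ℕ) (i : ℕ) with h | h
      · exact main ((i : ℕ) - (j : ℕ)) i (Or.inl (by omega))
      · exact main ((j : ℕ) - (i : ℕ)) i (Or.inr (by omega))
    set m := (j : ℕ) with hm
    have hmn : m < n := j.2
    by_cases hn1 : n = 1
    · -- base case: the path has one vertex
      subst hn1
      refine ⟨j, ?_⟩
      have hclog : Nat.clog 2 2 = 1 := by
        rw [Nat.clog_of_two_le one_lt_two le_rfl]
        norm_num
      rw [show (1 : ℕ) + 1 = 2 from rfl, hclog]
      have : Nonempty {y : V // F.le y (p j)} := ⟨⟨p j, F.le_refl _⟩⟩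
      exact Nat.card_pos
    · -- inductive step: remove the root and recurse on the larger half
      have hn2 : 2 ≤ n := by omega
      obtain ⟨o, a, hP1, hP2, hP3, ha1, han⟩ :
          ∃ o a, o + a ≤ n ∧ (∀ i, i < a → o + i ≠ m) ∧ n ≤ 2 * a + 1 ∧ 1 ≤ a ∧ a < n := by
        by_cases hside : n - 1 - m ≤ m
        · exact ⟨0, m, by omega, fun i hi => by omega, by omega, by omega, by omega⟩
        · exact ⟨m + 1, n - 1 - m, by omega, fun i hi => by omega, by omega, by omega, by omega⟩
      set V' := {v : V // v ≠ p j} with hV'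
      let F' : RootedForest V' := restrict F (fun v => v ≠ p j)
      have hne' : ∀ (i : ℕ) (hia : i < a), p ⟨o + i, by omega⟩ ≠ p j := by
        intro i hilt h
        have := hinj h
        have : o + i = m := congrArg Fin.val this
        exact hP2 i hilt this
      let p' : Fin a → V' := fun i => ⟨p ⟨o + i.1, by omega⟩, hne' i.1 i.2⟩
      have hinj' : Function.Injective p' := by
        intro i i' h
        have h1 : p ⟨o + i.1, by omega⟩ = p ⟨o + i'.1, by omega⟩ := congrArg Subtype.val h
        have h2 := hinj h1
        have h3 : o + i.1 = o + i'.1 := congrArg Fin.val h2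
        exact Fin.ext (by omega)
      have hcomp' : ∀ (i : ℕ) (h1 : i + 1 < a),
          F'.le (p' ⟨i, by omega⟩) (p' ⟨i + 1, h1⟩) ∨
          F'.le (p' ⟨i + 1, h1⟩) (p' ⟨i, by omega⟩) := by
        intro i h1
        have hb : o + i + 1 < n := by omega
        have hb2 : o + i < n := by omega
        have hb3 : o + (i + 1) < n := by omega
        have hc := hcomp (o + i) hb
        show F.le (p ⟨o + i, hb2⟩) (p ⟨o + (i + 1), hb3⟩) ∨
          F.le (p ⟨o + (i + 1), hb3⟩) (p ⟨o + i, hb2⟩)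
        exact hc
      obtain ⟨i', hi'⟩ := IH a han V' F' p' hinj' hcomp' ha1
      refine ⟨⟨o + i'.1, by have := i'.2; omega⟩, ?_⟩
      -- the root is a strict ancestor of p' i', which gains one level
      have hxne : (p' i').1 ≠ p j := (p' i').2
      have hxroot : F.le (p j) ((p' i').1) := hroot ⟨o + i'.1, by have := i'.2; omega⟩
      have hcard : F'.vheight (p' i') + 1 ≤ F.vheight ((p' i').1) := by
        classical
        let f : Option {y : V' // F'.le y (p' i')} → {y : V // F.le y ((p' i').1)} :=
          fun z => match z with
          | none => ⟨p j, hxroot⟩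
          | some z => ⟨z.1.1, z.2⟩
        have hfinj : Function.Injective f := by
          intro z z' h
          match z, z' with
          | none, none => rfl
          | some z, some z' =>
            have h1 := Subtype.ext_iff.mp h
            exact congrArg some (Subtype.ext (Subtype.ext h1))
          | none, some z' =>
            exact absurd (Subtype.ext_iff.mp h).symm z'.1.2
          | some z, none =>
            exact absurd (Subtype.ext_iff.mp h) z.1.2
        have := Nat.card_le_card_of_injective f hfinj
        rwa [Finite.card_option] at this
      have harith : Nat.clog 2 (n + 1) ≤ Nat.clog 2 (a + 1) + 1 := by
        have hrec : Nat.clog 2 (n + 1) = Nat.clog 2 ((n + 2) / 2) + 1 := by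
          rw [Nat.clog_of_two_le one_lt_two (by omega)]
          norm_num
        have hmono : Nat.clog 2 ((n + 2) / 2) ≤ Nat.clog 2 (a + 1) :=
          Nat.clog_mono_right 2 (by omega)
        omega
      calc Nat.clog 2 (n + 1) ≤ Nat.clog 2 (a + 1) + 1 := harith
        _ ≤ F'.vheight (p' i') + 1 := by omega
        _ ≤ F.vheight ((p' i').1) := hcard

end TDAux

theorem treeDepth_pathGraph (k : ℕ) (hk : 1 ≤ k) :
    treeDepth (SimpleGraph.pathGraph k) = Nat.clog 2 (k + 1) := by
  have hmem : Nat.clog 2 (k + 1) ∈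
      {n | ∃ F : RootedForest (Fin k), RootedForest.Supports (SimpleGraph.pathGraph k) F ∧
        F.height ≤ n} :=
    ⟨TDAux.pathForest k, TDAux.pathForest_supports k, TDAux.pathForest_height_le k hk⟩
  apply le_antisymm
  · exact Nat.sInf_le hmem
  · apply le_csInf ⟨_, hmem⟩
    rintro n ⟨F, hsup, hht⟩
    have hcomp : ∀ (i : ℕ) (h1 : i + 1 < k),
        F.le (id ⟨i, by omega⟩ : Fin k) (id ⟨i + 1, h1⟩) ∨
        F.le (id ⟨i + 1, h1⟩ : Fin k) (id ⟨i, by omega⟩) := by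
      intro i h1
      apply hsup
      rw [SimpleGraph.pathGraph_adj]
      left
      rfl
    obtain ⟨i, hi⟩ := TDAux.lower k (Fin k) F id Function.injective_id hcomp hk
    have hle : F.vheight (id i) ≤ F.height :=
      le_ciSup (Set.Finite.bddAbove (Set.finite_range _)) i
    omega
end

section
/- Let G be a graph whose longest path has k vertices. Then ⌈log₂(k+1)⌉ ≤ td(G) ≤ C(k+2, 2) − 1. -/
universe u

/-- Restriction of a rooted forest to a subtype. -/
def RootedForest.restrict {V : Type u} (F : RootedForest V) (P : V → Prop) :
    RootedForest {x // P x} where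
  le a b := F.le a.1 b.1
  le_refl a := F.le_refl a.1
  le_antisymm a b h1 h2 := Subtype.ext (F.le_antisymm _ _ h1 h2)
  le_trans a b c := F.le_trans _ _ _
  anc_chain a b c := F.anc_chain _ _ _

lemma vheight_eq_ncard {V : Type u} (F : RootedForest V) (x : V) :
    F.vheight x = Set.ncard {y | F.le y x} :=
  Nat.card_coe_set_eq {y | F.le y x}

lemma vheight_restrict {V : Type u} [Fintype V] (F : RootedForest V) (r : V) (x : V)
    (hx : x ≠ r) (hrx : F.le r x) :
    (F.restrict (· ≠ r)).vheight ⟨x, hx⟩ = F.vheight x - 1 := by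
  classical
  have e : {y : {z // z ≠ r} // (F.restrict (· ≠ r)).le y ⟨x, hx⟩} ≃
      {y : V // y ≠ r ∧ F.le y x} :=
    Equiv.subtypeSubtypeEquivSubtypeInter (fun z => z ≠ r) (fun z => F.le z x)
  have h2 : (F.restrict (· ≠ r)).vheight ⟨x, hx⟩ = Nat.card {y : V // y ≠ r ∧ F.le y x} :=
    Nat.card_congr e
  have h3 : {y : V | y ≠ r ∧ F.le y x} = {y | F.le y x} \ {r} := by
    ext y; simp [and_comm]
  have h4 : Nat.card {y : V // y ≠ r ∧ F.le y x} = ({y | F.le y x} \ {r}).ncard := by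
    rw [← h3]; exact Nat.card_coe_set_eq _
  rw [h2, h4, vheight_eq_ncard, Set.ncard_diff_singleton_of_mem (show r ∈ {y | F.le y x} from hrx)]

/-- Lower-bound lemma: an injective sequence with consecutive terms comparable in a
forest all of whose relevant vertex heights are `≤ h` has length `≤ 2^h - 1`. -/
lemma pathA (h : ℕ) : ∀ {V : Type u} [Fintype V] (F : RootedForest V) (n : ℕ)
    (f : Fin n → V), Function.Injective f →
    (∀ i : ℕ, (hi : i + 1 < n) →
      F.le (f ⟨i, by omega⟩) (f ⟨i + 1, hi⟩) ∨ F.le (f ⟨i + 1, hi⟩) (f ⟨i, by omega⟩)) →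
    (∀ i, F.vheight (f i) ≤ h) → n ≤ 2 ^ h - 1 := by
  induction h with
  | zero =>
    intro V _ F n f hinj hcomp hht
    by_contra hn
    have hpos : 0 < n := by omega
    have h1 : 0 < F.vheight (f ⟨0, hpos⟩) := by
      have : Nonempty {y // F.le y (f ⟨0, hpos⟩)} := ⟨⟨_, F.le_refl _⟩⟩
      exact Nat.card_pos
    have h2 := hht ⟨0, hpos⟩
    omega
  | succ h ih =>
    intro V _ F n f hinj hcomp hht
    classical
    rcases Nat.eq_zero_or_pos n with h0 | hpos
    · omega
    have hne : (Finset.univ : Finset (Fin n)).Nonempty := ⟨⟨0, hpos⟩, Finset.mem_univ _⟩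
    obtain ⟨i₀, -, hmin⟩ := Finset.exists_min_image Finset.univ (fun i => F.vheight (f i)) hne
    have hminF : ∀ j : Fin n, F.le (f j) (f i₀) → f j = f i₀ := by
      intro j hj
      by_contra hne2
      have hsub : {y | F.le y (f j)} ⊂ {y | F.le y (f i₀)} := by
        constructor
        · intro y hy; exact F.le_trans _ _ _ hy hj
        · intro hcon
          have h5 : F.le (f i₀) (f j) := hcon (F.le_refl (f i₀))
          exact hne2 (F.le_antisymm _ _ hj h5)
      have hlt : F.vheight (f j) < F.vheight (f i₀) := by
        rw [vheight_eq_ncard, vheight_eq_ncard]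
        exact Set.ncard_lt_ncard hsub (Set.toFinite _)
      have := hmin j (Finset.mem_univ j); omega
    -- f i₀ is an ancestor of everyone on the path
    have hup : ∀ t : ℕ, (ht : (i₀ : ℕ) + t < n) → F.le (f i₀) (f ⟨(i₀ : ℕ) + t, ht⟩) := by
      intro t
      induction t with
      | zero =>
        intro ht
        have he : (⟨(i₀ : ℕ) + 0, ht⟩ : Fin n) = i₀ := by ext; simp
        rw [he]; exact F.le_refl _
      | succ t iht =>
        intro ht
        have ht' : (i₀ : ℕ) + t < n := by omega
        have h1 := iht ht'
        show F.le (f i₀) (f ⟨(i₀ : ℕ) + t + 1, ht⟩)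
        rcases hcomp ((i₀ : ℕ) + t) ht with hc | hc
        · exact F.le_trans _ _ _ h1 hc
        · rcases F.anc_chain _ _ _ h1 hc with hd | hd
          · exact hd
          · have := hminF _ hd
            rw [this]; exact F.le_refl _
    have hdown : ∀ t : ℕ, t ≤ (i₀ : ℕ) → F.le (f i₀) (f ⟨(i₀ : ℕ) - t, by omega⟩) := by
      intro t
      induction t with
      | zero =>
        intro _
        have he : (⟨(i₀ : ℕ) - 0, by omega⟩ : Fin n) = i₀ := by ext; simp
        rw [he]; exact F.le_refl _
      | succ t iht =>
        intro ht
        have h1 := iht (by omega)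
        have hlt : (i₀ : ℕ) - (t + 1) + 1 < n := by omega
        have he : (⟨(i₀ : ℕ) - (t + 1) + 1, hlt⟩ : Fin n) = ⟨(i₀ : ℕ) - t, by omega⟩ :=
          Fin.ext (show (i₀ : ℕ) - (t + 1) + 1 = (i₀ : ℕ) - t by omega)
        rcases hcomp ((i₀ : ℕ) - (t + 1)) hlt with hc | hc
        · rw [he] at hc
          rcases F.anc_chain _ _ _ h1 hc with hd | hd
          · exact hd
          · have := hminF _ hd
            rw [this]; exact F.le_refl _
        · rw [he] at hc
          exact F.le_trans _ _ _ h1 hc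
    have hall : ∀ j : Fin n, F.le (f i₀) (f j) := by
      intro j
      rcases le_or_gt (i₀ : ℕ) (j : ℕ) with hle | hlt
      · have he : (⟨(i₀ : ℕ) + ((j : ℕ) - (i₀ : ℕ)), by omega⟩ : Fin n) = j :=
          Fin.ext (show (i₀ : ℕ) + ((j : ℕ) - (i₀ : ℕ)) = (j : ℕ) by omega)
        have := hup ((j : ℕ) - (i₀ : ℕ)) (by omega)
        rwa [he] at this
      · have he : (⟨(i₀ : ℕ) - ((i₀ : ℕ) - (j : ℕ)), by omega⟩ : Fin n) = j :=
          Fin.ext (show (i₀ : ℕ) - ((i₀ : ℕ) - (j : ℕ)) = (j : ℕ) by omega)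
        have := hdown ((i₀ : ℕ) - (j : ℕ)) (by omega)
        rwa [he] at this
    set r := f i₀ with hr
    set F' := F.restrict (· ≠ r) with hF'
    -- first subpath
    have hb1 : (i₀ : ℕ) ≤ 2 ^ h - 1 := by
      have hlt1 : ∀ j : Fin (i₀ : ℕ), (j : ℕ) < n := fun j => lt_trans j.2 i₀.2
      set f₁ : Fin (i₀ : ℕ) → {x // x ≠ r} := fun j =>
        ⟨f ⟨j, hlt1 j⟩, by
          intro hc
          have h5 : (j : ℕ) = (i₀ : ℕ) := congrArg Fin.val (hinj hc)
          have h6 := j.2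
          omega⟩ with hf₁
      refine ih F' (i₀ : ℕ) f₁ ?_ ?_ ?_
      · intro a b hab
        have h5 : f ⟨a, hlt1 a⟩ = f ⟨b, hlt1 b⟩ := congrArg Subtype.val hab
        have h6 := congrArg Fin.val (hinj h5)
        have h7 : (a : ℕ) = (b : ℕ) := h6
        exact Fin.ext h7
      · intro i hi
        exact hcomp i (by omega)
      · intro j
        have h1 : F'.vheight (f₁ j) = F.vheight (f ⟨j, hlt1 j⟩) - 1 :=
          vheight_restrict F r _ _ (hall ⟨j, hlt1 j⟩)
        have h2 := hht ⟨j, hlt1 j⟩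
        omega
    -- second subpath
    have hb2 : n - 1 - (i₀ : ℕ) ≤ 2 ^ h - 1 := by
      have hlt2 : ∀ j : Fin (n - 1 - (i₀ : ℕ)), (i₀ : ℕ) + 1 + (j : ℕ) < n := by
        intro j; have := j.2; omega
      set f₂ : Fin (n - 1 - (i₀ : ℕ)) → {x // x ≠ r} := fun j =>
        ⟨f ⟨(i₀ : ℕ) + 1 + j, hlt2 j⟩, by
          intro hc
          have h5 : (i₀ : ℕ) + 1 + (j : ℕ) = (i₀ : ℕ) := congrArg Fin.val (hinj hc)
          omega⟩ with hf₂
      refine ih F' _ f₂ ?_ ?_ ?_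
      · intro a b hab
        have h5 : f ⟨(i₀ : ℕ) + 1 + a, hlt2 a⟩ = f ⟨(i₀ : ℕ) + 1 + b, hlt2 b⟩ :=
          congrArg Subtype.val hab
        have h6 := congrArg Fin.val (hinj h5)
        have h7 : (i₀ : ℕ) + 1 + (a : ℕ) = (i₀ : ℕ) + 1 + (b : ℕ) := h6
        exact Fin.ext (show (a : ℕ) = (b : ℕ) by omega)
      · intro i hi
        have h1 := hcomp ((i₀ : ℕ) + 1 + i) (by omega)
        exact h1
      · intro j
        have h1 : F'.vheight (f₂ j) = F.vheight (f ⟨(i₀ : ℕ) + 1 + j, hlt2 j⟩) - 1 :=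
          vheight_restrict F r _ _ (hall _)
        have h2 := hht ⟨(i₀ : ℕ) + 1 + j, hlt2 j⟩
        omega
    have hi0 : (i₀ : ℕ) < n := i₀.2
    have hp : 1 ≤ 2 ^ h := Nat.one_le_two_pow
    have hps : 2 ^ (h + 1) = 2 ^ h * 2 := pow_succ 2 h
    omega

lemma reach_comap {V : Type u} (G : SimpleGraph V) (P : V → Prop) :
    ∀ {a b : V} (W : G.Walk a b), (∀ c ∈ W.support, P c) →
    ∀ (ha : P a) (hb : P b),
      (G.comap (Subtype.val : {x // P x} → V)).Reachable ⟨a, ha⟩ ⟨b, hb⟩ := by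
  intro a b W
  induction W with
  | nil => intro _ ha hb; exact SimpleGraph.Reachable.refl _
  | @cons u x b h W ih =>
    intro hsup ha hb
    have hx : P x := hsup x (by
      rw [SimpleGraph.Walk.support_cons]
      exact List.mem_cons_of_mem _ W.start_mem_support)
    have h1 : (G.comap (Subtype.val : {x // P x} → V)).Adj ⟨u, ha⟩ ⟨x, hx⟩ := h
    exact h1.reachable.trans (ih (fun c hc => hsup c (by
      rw [SimpleGraph.Walk.support_cons]; exact List.mem_cons_of_mem _ hc)) hx hb)

lemma walk_to_nbr {V : Type u} {G : SimpleGraph V} :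
    ∀ {a c : V} (W : G.Walk a c), a ≠ c →
      ∃ w : V, G.Adj c w ∧ ∃ W' : G.Walk a w, c ∉ W'.support := by
  intro a c W
  induction W with
  | nil => intro h; exact absurd rfl h
  | @cons u x c h W ih =>
    intro hne
    by_cases hxc : x = c
    · subst hxc
      refine ⟨u, h.symm, SimpleGraph.Walk.nil, ?_⟩
      rw [SimpleGraph.Walk.support_nil]
      simp only [List.mem_singleton]
      exact fun he => hne he.symm
    · obtain ⟨w, hw, W', hW'⟩ := ih hxc
      refine ⟨w, hw, SimpleGraph.Walk.cons h W', ?_⟩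
      rw [SimpleGraph.Walk.support_cons]
      intro hc
      rcases List.mem_cons.mp hc with h1 | h1
      · exact hne h1.symm
      · exact hW' h1

lemma r_const {V : Type u} {G : SimpleGraph V} (r : V → V)
    (hr : ∀ x y, G.Adj x y → r x = r y) :
    ∀ {a b : V}, G.Reachable a b → r a = r b := by
  intro a b hab
  obtain ⟨W⟩ := hab
  induction W with
  | nil => rfl
  | cons h W ih => exact (hr _ _ h).trans ih

lemma main (n : ℕ) : ∀ (V : Type u) [Fintype V], Fintype.card V ≤ n →
    ∀ (G : SimpleGraph V) (r : V → V),
    (∀ x, G.Reachable x (r x)) → (∀ x y, G.Adj x y → r x = r y) → (∀ x, r (r x) = r x) →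
    ∃ F : RootedForest V, RootedForest.Supports G F ∧
      ∀ x : V, ∃ (m : ℕ) (p : Fin (m + 1) → V), Function.Injective p ∧
        (∀ i : Fin m, G.Adj (p i.castSucc) (p i.succ)) ∧
        Set.range p = {y | F.le y x} ∧ p 0 = r x ∧ p (Fin.last m) = x := by
  induction n with
  | zero =>
    intro V _ hcard G r _ _ _
    have hVe : IsEmpty V := Fintype.card_eq_zero_iff.mp (by omega)
    exact ⟨⟨Eq, fun _ => rfl, fun u v h _ => h, fun u v w h1 h2 => h1.trans h2,
      fun u v w h1 h2 => Or.inl (h1.trans h2.symm)⟩,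
      fun u v h => (hVe.false u).elim, fun x => (hVe.false x).elim⟩
  | succ n ih =>
    intro V _ hcard G r hreach hadjr hidem
    classical
    by_cases hV : IsEmpty V
    · exact ⟨⟨Eq, fun _ => rfl, fun u v h _ => h, fun u v w h1 h2 => h1.trans h2,
        fun u v w h1 h2 => Or.inl (h1.trans h2.symm)⟩,
        fun u v h => (hV.false u).elim, fun x => (hV.false x).elim⟩
    obtain ⟨x₀⟩ := not_isEmpty_iff.mp hV
    set v := r x₀ with hv
    have hrv : r v = v := hidem x₀
    -- the B side (other components)
    set TB := {x : V // ¬ r x = v} with hTB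
    set GB : SimpleGraph TB := G.comap Subtype.val with hGB
    have hcB : Fintype.card TB ≤ n := by
      have h1 : Fintype.card TB < Fintype.card V :=
        Fintype.card_subtype_lt (x := v) (by simp [hrv])
      omega
    set rB : TB → TB := fun x => ⟨r x.1, by rw [hidem]; exact x.2⟩ with hrB
    have hreachB : ∀ x : TB, GB.Reachable x (rB x) := by
      intro x
      obtain ⟨W⟩ := hreach x.1
      exact reach_comap G _ W (fun c hc => by
        have hRc : G.Reachable c (r x.1) := ⟨W.dropUntil c hc⟩
        have h5 : r c = r (r x.1) := r_const r hadjr hRc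
        rw [hidem] at h5
        rw [h5]; exact x.2) x.2 (rB x).2
    have hadjB : ∀ x y : TB, GB.Adj x y → rB x = rB y := fun x y h =>
      Subtype.ext (hadjr x.1 y.1 h)
    have hidemB : ∀ x : TB, rB (rB x) = rB x := fun x => Subtype.ext (hidem x.1)
    obtain ⟨FB, hFBsup, hFBchain⟩ := ih TB hcB GB rB hreachB hadjB hidemB
    -- the A side (component of v, minus v)
    set TA := {x : V // r x = v ∧ x ≠ v} with hTA
    set GA : SimpleGraph TA := G.comap Subtype.val with hGA
    have hcA : Fintype.card TA ≤ n := by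
      have h1 : Fintype.card TA < Fintype.card V :=
        Fintype.card_subtype_lt (x := v) (by simp)
      omega
    have claim : ∀ x : TA, ∃ wa : TA, GA.Reachable x wa ∧ G.Adj v wa.1 := by
      intro x
      obtain ⟨W0⟩ := hreach x.1
      rw [x.2.1] at W0
      obtain ⟨w, hw, W', hW'⟩ := walk_to_nbr W0 x.2.2
      have hsupP : ∀ c ∈ W'.support, r c = v ∧ c ≠ v := by
        intro c hc
        have hRcw : G.Reachable c w := ⟨W'.dropUntil c hc⟩
        have h1 : r c = r w := r_const r hadjr hRcw
        have h2 : r w = r v := hadjr w v hw.symm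
        refine ⟨by rw [h1, h2, hrv], ?_⟩
        intro he; rw [he] at hc; exact hW' hc
      have hwP : r w = v ∧ w ≠ v := hsupP w W'.end_mem_support
      exact ⟨⟨w, hwP⟩, reach_comap G _ W' hsupP x.2 hwP, hw⟩
    set rA : TA → TA := fun x => (claim (GA.connectedComponentMk x).out).choose with hrA
    have hAnbr : ∀ x : TA, G.Adj v (rA x).1 := fun x =>
      (claim (GA.connectedComponentMk x).out).choose_spec.2
    have houtA : ∀ x : TA, GA.Reachable x (GA.connectedComponentMk x).out := fun x =>
      (SimpleGraph.ConnectedComponent.eq.mp ((GA.connectedComponentMk x).out_eq)).symm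
    have hreachA : ∀ x : TA, GA.Reachable x (rA x) := fun x =>
      (houtA x).trans (claim (GA.connectedComponentMk x).out).choose_spec.1
    have hcmA : ∀ x y : TA, GA.Reachable x y → rA x = rA y := by
      intro x y h
      have he : GA.connectedComponentMk x = GA.connectedComponentMk y :=
        SimpleGraph.ConnectedComponent.eq.mpr h
      show (claim (GA.connectedComponentMk x).out).choose =
        (claim (GA.connectedComponentMk y).out).choose
      rw [he]
    have hadjA : ∀ x y : TA, GA.Adj x y → rA x = rA y := fun x y h => hcmA x y h.reachable
    have hidemA : ∀ x : TA, rA (rA x) = rA x := fun x => hcmA (rA x) x (hreachA x).symm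
    obtain ⟨FA, hFAsup, hFAchain⟩ := ih TA hcA GA rA hreachA hadjA hidemA
    -- assemble the forest
    refine ⟨⟨fun a b => (a = v ∧ r b = v) ∨
        (∃ (ha : r a = v ∧ a ≠ v) (hb : r b = v ∧ b ≠ v), FA.le ⟨a, ha⟩ ⟨b, hb⟩) ∨
        (∃ (ha : ¬ r a = v) (hb : ¬ r b = v), FB.le ⟨a, ha⟩ ⟨b, hb⟩),
        ?_, ?_, ?_, ?_⟩, ?_, ?_⟩
    · -- refl
      intro a
      by_cases hav : a = v
      · exact Or.inl ⟨hav, by rw [hav]; exact hrv⟩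
      · by_cases hra : r a = v
        · exact Or.inr (Or.inl ⟨⟨hra, hav⟩, ⟨hra, hav⟩, FA.le_refl _⟩)
        · exact Or.inr (Or.inr ⟨hra, hra, FB.le_refl _⟩)
    · -- antisymm
      intro a b h1 h2
      rcases h1 with ⟨ha1, hb1⟩ | ⟨ha1, hb1, hle1⟩ | ⟨ha1, hb1, hle1⟩
      · rcases h2 with ⟨ha2, hb2⟩ | ⟨ha2, hb2, hle2⟩ | ⟨ha2, hb2, hle2⟩
        · rw [ha1, ha2]
        · exact absurd ha1 hb2.2
        · exact absurd (by rw [ha1]; exact hrv) hb2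
      · rcases h2 with ⟨ha2, hb2⟩ | ⟨ha2, hb2, hle2⟩ | ⟨ha2, hb2, hle2⟩
        · exact absurd ha2 hb1.2
        · exact congrArg Subtype.val (FA.le_antisymm _ _ hle1 hle2)
        · exact absurd hb1.1 ha2
      · rcases h2 with ⟨ha2, hb2⟩ | ⟨ha2, hb2, hle2⟩ | ⟨ha2, hb2, hle2⟩
        · exact absurd hb2 ha1
        · exact absurd hb2.1 ha1
        · exact congrArg Subtype.val (FB.le_antisymm _ _ hle1 hle2)
    · -- trans
      intro a b c h1 h2
      rcases h1 with ⟨ha1, hb1⟩ | ⟨ha1, hb1, hle1⟩ | ⟨ha1, hb1, hle1⟩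
      · rcases h2 with ⟨hb2, hc2⟩ | ⟨hb2, hc2, hle2⟩ | ⟨hb2, hc2, hle2⟩
        · exact Or.inl ⟨ha1, hc2⟩
        · exact Or.inl ⟨ha1, hc2.1⟩
        · exact absurd hb1 hb2
      · rcases h2 with ⟨hb2, hc2⟩ | ⟨hb2, hc2, hle2⟩ | ⟨hb2, hc2, hle2⟩
        · exact absurd hb2 hb1.2
        · exact Or.inr (Or.inl ⟨ha1, hc2, FA.le_trans _ _ _ hle1 hle2⟩)
        · exact absurd hb1.1 hb2
      · rcases h2 with ⟨hb2, hc2⟩ | ⟨hb2, hc2, hle2⟩ | ⟨hb2, hc2, hle2⟩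
        · exact absurd (by rw [hb2]; exact hrv) hb1
        · exact absurd hb2.1 hb1
        · exact Or.inr (Or.inr ⟨ha1, hc2, FB.le_trans _ _ _ hle1 hle2⟩)
    · -- anc_chain
      intro a b c h1 h2
      rcases h1 with ⟨ha1, hc1⟩ | ⟨ha1, hc1, hle1⟩ | ⟨ha1, hc1, hle1⟩
      · rcases h2 with ⟨hb2, hc2⟩ | ⟨hb2, hc2, hle2⟩ | ⟨hb2, hc2, hle2⟩
        · exact Or.inl (Or.inl ⟨ha1, by rw [hb2]; exact hrv⟩)
        · exact Or.inl (Or.inl ⟨ha1, hb2.1⟩)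
        · exact absurd hc1 hc2
      · rcases h2 with ⟨hb2, hc2⟩ | ⟨hb2, hc2, hle2⟩ | ⟨hb2, hc2, hle2⟩
        · exact Or.inr (Or.inl ⟨hb2, ha1.1⟩)
        · rcases FA.anc_chain _ _ _ hle1 hle2 with hd | hd
          · exact Or.inl (Or.inr (Or.inl ⟨ha1, hb2, hd⟩))
          · exact Or.inr (Or.inr (Or.inl ⟨hb2, ha1, hd⟩))
        · exact absurd hc1.1 hc2
      · rcases h2 with ⟨hb2, hc2⟩ | ⟨hb2, hc2, hle2⟩ | ⟨hb2, hc2, hle2⟩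
        · exact absurd hc2 hc1
        · exact absurd hc2.1 hc1
        · rcases FB.anc_chain _ _ _ hle1 hle2 with hd | hd
          · exact Or.inl (Or.inr (Or.inr ⟨ha1, hb2, hd⟩))
          · exact Or.inr (Or.inr (Or.inr ⟨hb2, ha1, hd⟩))
    · -- Supports
      intro a b hab
      have hrab : r a = r b := hadjr a b hab
      by_cases hav : a = v
      · refine Or.inl (Or.inl ⟨hav, ?_⟩)
        rw [← hrab, hav]; exact hrv
      · by_cases hbv : b = v
        · refine Or.inr (Or.inl ⟨hbv, ?_⟩)
          rw [hrab, hbv]; exact hrv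
        · by_cases hra : r a = v
          · have hrb : r b = v := by rw [← hrab]; exact hra
            have hGA : GA.Adj ⟨a, hra, hav⟩ ⟨b, hrb, hbv⟩ := hab
            rcases hFAsup _ _ hGA with hd | hd
            · exact Or.inl (Or.inr (Or.inl ⟨⟨hra, hav⟩, ⟨hrb, hbv⟩, hd⟩))
            · exact Or.inr (Or.inr (Or.inl ⟨⟨hrb, hbv⟩, ⟨hra, hav⟩, hd⟩))
          · have hrb : ¬ r b = v := by rw [← hrab]; exact hra
            have hGB : GB.Adj ⟨a, hra⟩ ⟨b, hrb⟩ := hab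
            rcases hFBsup _ _ hGB with hd | hd
            · exact Or.inl (Or.inr (Or.inr ⟨hra, hrb, hd⟩))
            · exact Or.inr (Or.inr (Or.inr ⟨hrb, hra, hd⟩))
    · -- chain paths
      intro x
      by_cases hxv : x = v
      · subst hxv
        refine ⟨0, fun _ => v, fun i j _ => Fin.ext (by omega), fun i => i.elim0, ?_,
          hrv.symm, rfl⟩
        rw [Set.range_const]
        ext y
        simp only [Set.mem_singleton_iff, Set.mem_setOf_eq]
        constructor
        · intro he; exact Or.inl ⟨he, hrv⟩
        · intro hle
          rcases hle with ⟨h1, _⟩ | ⟨h1, hb, _⟩ | ⟨h1, hb, _⟩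
          · exact h1
          · exact absurd rfl hb.2
          · exact absurd hrv hb
      · by_cases hrx : r x = v
        · -- inside the component of v
          obtain ⟨m, p, hpinj, hpadj, hprange, hp0, hplast⟩ := hFAchain ⟨x, hrx, hxv⟩
          refine ⟨m + 1, Fin.cons v (fun i => (p i).1), ?_, ?_, ?_, ?_, ?_⟩
          · rw [Fin.cons_injective_iff]
            constructor
            · rintro ⟨i, hi⟩
              exact (p i).2.2 hi
            · exact fun i j hij => hpinj (Subtype.ext hij)
          · intro i
            refine Fin.cases ?_ ?_ i
            · have e1 : ((0 : Fin (m + 1)).castSucc) = (0 : Fin (m + 2)) := Fin.castSucc_zero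
              rw [e1, Fin.cons_zero, Fin.cons_succ, hp0]
              exact hAnbr _
            · intro j
              rw [← Fin.succ_castSucc, Fin.cons_succ, Fin.cons_succ]
              exact hpadj j
          · rw [Fin.range_cons]
            ext y
            simp only [Set.mem_insert_iff, Set.mem_range, Set.mem_setOf_eq]
            constructor
            · rintro (rfl | ⟨i, hi⟩)
              · exact Or.inl ⟨rfl, hrx⟩
              · have hyA : r y = v ∧ y ≠ v := hi ▸ (p i).2
                refine Or.inr (Or.inl ⟨hyA, ⟨hrx, hxv⟩, ?_⟩)
                have h3 : p i ∈ {z | FA.le z ⟨x, hrx, hxv⟩} := by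
                  rw [← hprange]; exact ⟨i, rfl⟩
                have he : p i = ⟨y, hyA⟩ := Subtype.ext hi
                rwa [he] at h3
            · intro hle
              rcases hle with ⟨h1, _⟩ | ⟨ha, hb, hle⟩ | ⟨ha, hb, hle⟩
              · exact Or.inl h1
              · refine Or.inr ?_
                have h3 : (⟨y, ha⟩ : TA) ∈ Set.range p := by rw [hprange]; exact hle
                obtain ⟨i, hi⟩ := h3
                exact ⟨i, congrArg Subtype.val hi⟩
              · exact absurd hrx hb
          · rw [Fin.cons_zero]
            exact hrx.symm
          · rw [← Fin.succ_last, Fin.cons_succ, hplast]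
        · -- in another component
          obtain ⟨m, p, hpinj, hpadj, hprange, hp0, hplast⟩ := hFBchain ⟨x, hrx⟩
          refine ⟨m, fun i => (p i).1, fun i j hij => hpinj (Subtype.ext hij),
            fun i => hpadj i, ?_, ?_, ?_⟩
          · ext y
            simp only [Set.mem_range, Set.mem_setOf_eq]
            constructor
            · rintro ⟨i, hi⟩
              have hyB : ¬ r y = v := hi ▸ (p i).2
              refine Or.inr (Or.inr ⟨hyB, hrx, ?_⟩)
              have h3 : p i ∈ {z | FB.le z ⟨x, hrx⟩} := by
                rw [← hprange]; exact ⟨i, rfl⟩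
              have he : p i = ⟨y, hyB⟩ := Subtype.ext hi
              rwa [he] at h3
            · intro hle
              rcases hle with ⟨h1, hb⟩ | ⟨ha, hb, hle⟩ | ⟨ha, hb, hle⟩
              · exact absurd hb hrx
              · exact absurd hb.1 hrx
              · have h3 : (⟨y, ha⟩ : TB) ∈ Set.range p := by rw [hprange]; exact hle
                obtain ⟨i, hi⟩ := h3
                exact ⟨i, congrArg Subtype.val hi⟩
          · show (p 0).1 = r x
            rw [hp0]
          · show (p (Fin.last m)).1 = x
            rw [hplast]

theorem treeDepth_bounds_of_longest_path {V : Type*} [Fintype V] (G : SimpleGraph V) (k : ℕ)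
    (h1 : ∃ f : SimpleGraph.pathGraph k →g G, Function.Injective f)
    (h2 : ¬ ∃ f : SimpleGraph.pathGraph (k + 1) →g G, Function.Injective f) :
    Nat.clog 2 (k + 1) ≤ treeDepth G ∧ treeDepth G ≤ (k + 2).choose 2 - 1 := by
  classical
  obtain ⟨F, hFsup, hFchain⟩ := main (Fintype.card V) V le_rfl G
    (fun x => (G.connectedComponentMk x).out)
    (fun x => (SimpleGraph.ConnectedComponent.eq.mp ((G.connectedComponentMk x).out_eq)).symm)
    (fun x y h => congrArg Quot.out (SimpleGraph.ConnectedComponent.eq.mpr h.reachable))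
    (fun x => congrArg Quot.out ((G.connectedComponentMk x).out_eq))
  have hvh : ∀ x : V, F.vheight x ≤ k := by
    intro x
    obtain ⟨m, p, hpinj, hpadj, hprange, hp0, hplast⟩ := hFchain x
    have hmk : m + 1 ≤ k := by
      by_contra hc
      push_neg at hc
      apply h2
      refine ⟨⟨fun i => p (Fin.castLE (by omega) i), ?_⟩, ?_⟩
      · intro a b hab
        rw [SimpleGraph.pathGraph_adj] at hab
        rcases hab with hab | hab
        · have ha : (a : ℕ) < m := by have := b.2; omega
          have e1 : (Fin.castLE (by omega : k + 1 ≤ m + 1) a) = (⟨(a : ℕ), ha⟩ : Fin m).castSucc :=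
            Fin.ext rfl
          have e2 : (Fin.castLE (by omega : k + 1 ≤ m + 1) b) = (⟨(a : ℕ), ha⟩ : Fin m).succ :=
            Fin.ext (show (b : ℕ) = (a : ℕ) + 1 by omega)
          show G.Adj (p (Fin.castLE (by omega) a)) (p (Fin.castLE (by omega) b))
          rw [e1, e2]
          exact hpadj _
        · have hb : (b : ℕ) < m := by have := a.2; omega
          have e1 : (Fin.castLE (by omega : k + 1 ≤ m + 1) b) = (⟨(b : ℕ), hb⟩ : Fin m).castSucc :=
            Fin.ext rfl
          have e2 : (Fin.castLE (by omega : k + 1 ≤ m + 1) a) = (⟨(b : ℕ), hb⟩ : Fin m).succ :=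
            Fin.ext (show (a : ℕ) = (b : ℕ) + 1 by omega)
          show G.Adj (p (Fin.castLE (by omega) a)) (p (Fin.castLE (by omega) b))
          rw [e1, e2]
          exact (hpadj _).symm
      · intro a b hab
        have h5 : Fin.castLE (by omega : k + 1 ≤ m + 1) a = Fin.castLE (by omega) b :=
          hpinj hab
        have h6 := congrArg Fin.val h5
        have h7 : (a : ℕ) = (b : ℕ) := h6
        exact Fin.ext h7
    have h4 : F.vheight x = ({y | F.le y x} : Set V).ncard := vheight_eq_ncard F x
    rw [h4, ← hprange]
    have h5 : (Set.range p).ncard ≤ m + 1 := by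
      rw [← Set.image_univ]
      calc (p '' Set.univ).ncard ≤ (Set.univ : Set (Fin (m + 1))).ncard :=
            Set.ncard_image_le Set.finite_univ
        _ = m + 1 := by rw [Set.ncard_univ, Nat.card_eq_fintype_card, Fintype.card_fin]
    omega
  have hht : F.height ≤ k := by
    rcases isEmpty_or_nonempty V with hV | hV
    · rw [RootedForest.height, ciSup_of_empty]
      exact bot_le
    · exact ciSup_le hvh
  have hmem : k ∈ {n | ∃ F : RootedForest V, RootedForest.Supports G F ∧ F.height ≤ n} :=
    ⟨F, hFsup, hht⟩
  have hub : treeDepth G ≤ k := Nat.sInf_le hmem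
  have hch : k ≤ (k + 2).choose 2 - 1 := by
    have h6 : (k + 2).choose 2 = (k + 2) * (k + 1) / 2 := by
      rw [Nat.choose_two_right]; norm_num
    have h7 : k + 1 ≤ (k + 2) * (k + 1) / 2 := by
      rw [Nat.le_div_iff_mul_le (by norm_num)]
      nlinarith
    omega
  have hlb : Nat.clog 2 (k + 1) ≤ treeDepth G := by
    obtain ⟨F', hF'sup, hF'h⟩ := Nat.sInf_mem (⟨k, hmem⟩ : Set.Nonempty _)
    obtain ⟨f, hfinj⟩ := h1
    have hcomp : ∀ i : ℕ, (hi : i + 1 < k) →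
        F'.le (f ⟨i, by omega⟩) (f ⟨i + 1, hi⟩) ∨ F'.le (f ⟨i + 1, hi⟩) (f ⟨i, by omega⟩) := by
      intro i hi
      have hadj : (SimpleGraph.pathGraph k).Adj ⟨i, by omega⟩ ⟨i + 1, hi⟩ := by
        rw [SimpleGraph.pathGraph_adj]; exact Or.inl rfl
      exact hF'sup _ _ (f.map_adj hadj)
    have hvb : ∀ i : Fin k, F'.vheight (f i) ≤ treeDepth G := by
      intro i
      have h8 : F'.vheight (f i) ≤ F'.height :=
        le_ciSup (Set.Finite.bddAbove (Set.finite_range F'.vheight)) (f i)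
      exact h8.trans hF'h
    have h9 := pathA (treeDepth G) F' k (⇑f) hfinj hcomp hvb
    have h10 : 1 ≤ 2 ^ treeDepth G := Nat.one_le_two_pow
    have h11 : k + 1 ≤ 2 ^ treeDepth G := by omega
    exact (Nat.clog_le_iff_le_pow (by norm_num)).mpr h11
  exact ⟨hlb, hub.trans hch⟩
end

section
/- If a connected graph G has a centered coloring using p colors, then G has tree-depth at most p. Moreover, a rooted forest F of height at most p with G ⊆ clos(F) can be constructed by repeatedly removing, in each connected component, a vertex whose color appears exactly once in that component. -/
/-- A centered coloring: every nonempty connected (induced) subgraph has a color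
appearing exactly once. -/
def IsCenteredColoring {V α : Type*} (G : SimpleGraph V) (c : V → α) : Prop :=
  ∀ S : Set V, S.Nonempty → (G.induce S).Connected → ∃ a : α, ∃! v : S, c ↑v = a


open SimpleGraph

section Helpers
variable {V α : Type*}

/-- induce-induce iso -/
noncomputable def induceInduceIso (G : SimpleGraph V) (T : Set V) (S : Set T) :
    (G.induce T).induce S ≃g G.induce (Subtype.val '' S) where
  toEquiv := Equiv.Set.image Subtype.val S Subtype.val_injective
  map_rel_iff' := Iff.rfl

lemma centered_induce (G : SimpleGraph V) (c : V → α) (hc : IsCenteredColoring G c)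
    (T : Set V) : IsCenteredColoring (G.induce T) (fun v => c v.1) := by
  intro S hS hconn
  have hconn' : (G.induce (Subtype.val '' S)).Connected :=
    ((induceInduceIso G T S).connected_iff).mp hconn
  obtain ⟨a, v, hv, huniq⟩ := hc (Subtype.val '' S) (hS.image _) hconn'
  obtain ⟨w, hw, hwv⟩ := v.2
  refine ⟨a, ⟨w, hw⟩, ?_, ?_⟩
  · show c w.1 = a
    rw [hwv]; exact hv
  · rintro ⟨y, hy⟩ h
    have : (⟨y.1, ⟨y, hy, rfl⟩⟩ : (Subtype.val '' S)) = v := huniq _ h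
    have hyv : y.1 = v.1 := congrArg Subtype.val this
    have hwv' : w.1 = v.1 := congrArg Subtype.val (show (⟨w.1, ⟨w, hw, rfl⟩⟩ : (Subtype.val '' S)) = v from Subtype.ext hwv)
    exact Subtype.ext (Subtype.val_injective (hyv.trans hwv'.symm))

lemma connected_induce_supp (G : SimpleGraph V) (K : G.ConnectedComponent) :
    (G.induce K.supp).Connected := by
  classical
  obtain ⟨v, hv⟩ := K.exists_rep
  have hne : Nonempty (K.supp) := ⟨⟨v, hv⟩⟩
  rw [connected_iff]
  refine ⟨?_, hne⟩
  rintro ⟨u, hu⟩ ⟨w, hw⟩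
  have hr : G.Reachable u w := by
    rw [ConnectedComponent.mem_supp_iff] at hu hw
    exact ConnectedComponent.exact (hu.trans hw.symm)
  obtain ⟨p⟩ := hr
  have hsub : {x | x ∈ p.support} ⊆ K.supp := by
    intro x hx
    have hrx : G.Reachable u x := (p.takeUntil x hx).reachable
    rw [ConnectedComponent.mem_supp_iff] at hu ⊢
    rw [← hu]
    exact (ConnectedComponent.sound hrx).symm
  have hcw := p.connected_induce_support
  have h1 : (G.induce {x | x ∈ p.support}).Reachable ⟨u, p.start_mem_support⟩
      ⟨w, p.end_mem_support⟩ := hcw.preconnected _ _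
  have h2 := h1.map (G.induceHomOfLE hsub).toHom
  convert h2 using 2 <;> rfl

end Helpers
section Glue
variable {V : Type*} {G : SimpleGraph V}

/-- Glue forests on connected components into one forest. -/
def glueForest (F : ∀ K : G.ConnectedComponent, RootedForest K.supp) : RootedForest V where
  le u v := ∃ (K : G.ConnectedComponent) (hu : u ∈ K.supp) (hv : v ∈ K.supp),
    (F K).le ⟨u, hu⟩ ⟨v, hv⟩
  le_refl v := ⟨G.connectedComponentMk v, rfl, rfl, (F _).le_refl _⟩
  le_antisymm := by
    rintro u v ⟨K, hu, hv, h1⟩ ⟨K', hv', hu', h2⟩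
    have : K = K' := by rw [← hu, ← hu']
    subst this
    exact congrArg Subtype.val ((F K).le_antisymm _ _ h1 h2)
  le_trans := by
    rintro u v w ⟨K, hu, hv, h1⟩ ⟨K', hv', hw', h2⟩
    have : K = K' := by rw [← hv, ← hv']
    subst this
    exact ⟨K, hu, hw', (F K).le_trans _ _ _ h1 h2⟩
  anc_chain := by
    rintro u v w ⟨K, hu, hw, h1⟩ ⟨K', hv', hw', h2⟩
    have : K = K' := by rw [← hw, ← hw']
    subst this
    rcases (F K).anc_chain _ _ _ h1 h2 with h | h
    · exact Or.inl ⟨K, hu, hv', h⟩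
    · exact Or.inr ⟨K, hv', hu, h⟩

lemma glueForest_supports (F : ∀ K : G.ConnectedComponent, RootedForest K.supp)
    (hF : ∀ K, (F K).Supports (G.induce K.supp)) : (glueForest F).Supports G := by
  intro u v huv
  have hv : v ∈ (G.connectedComponentMk u).supp :=
    (SimpleGraph.ConnectedComponent.connectedComponentMk_eq_of_adj huv).symm
  rcases hF _ ⟨u, rfl⟩ ⟨v, hv⟩ huv with h | h
  · exact Or.inl ⟨_, rfl, hv, h⟩
  · exact Or.inr ⟨_, hv, rfl, h⟩

lemma glueForest_vheight (F : ∀ K : G.ConnectedComponent, RootedForest K.supp) (x : V) :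
    (glueForest F).vheight x =
      (F (G.connectedComponentMk x)).vheight ⟨x, rfl⟩ := by
  have hmem : ∀ y, (glueForest F).le y x → y ∈ (G.connectedComponentMk x).supp := by
    rintro y ⟨K', hu, hv, h⟩
    exact hu.trans hv.symm
  have hle : ∀ y (hy : (glueForest F).le y x),
      (F (G.connectedComponentMk x)).le ⟨y, hmem y hy⟩ ⟨x, rfl⟩ := by
    rintro y ⟨K', hu, hv, h⟩
    have hv' : G.connectedComponentMk x = K' := hv
    subst hv'
    exact h
  exact Nat.card_congr
    { toFun := fun y => ⟨⟨y.1, hmem y.1 y.2⟩, hle y.1 y.2⟩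
      invFun := fun z => ⟨z.1.1, ⟨_, z.1.2, rfl, z.2⟩⟩
      left_inv := fun y => rfl
      right_inv := fun z => rfl }

end Glue
section AddRoot

lemma nat_card_option (α : Type*) [Finite α] : Nat.card (Option α) = Nat.card α + 1 := by
  simp [Nat.card_eq_fintype_card]

variable {V : Type*} {G : SimpleGraph V}

/-- Extend a forest on `V \ {r}` by putting `r` below everything. -/
def addRoot (r : V) (F' : RootedForest ({v : V | v ≠ r} : Set V)) : RootedForest V where
  le u v := u = r ∨ u = v ∨ ∃ (hu : u ≠ r) (hv : v ≠ r), F'.le ⟨u, hu⟩ ⟨v, hv⟩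
  le_refl v := Or.inr (Or.inl rfl)
  le_antisymm := by
    rintro u v (rfl | rfl | ⟨hu, hv, h⟩) (h2 | h2 | ⟨hv', hu', h'⟩)
    · rw [h2]
    · exact h2.symm
    · exact absurd rfl hu'
    · rfl
    · exact h2.symm
    · rfl
    · exact absurd h2 hv
    · exact h2.symm
    · exact congrArg Subtype.val (F'.le_antisymm _ _ h h')
  le_trans := by
    rintro u v w (rfl | rfl | ⟨hu, hv, h⟩) h2
    · exact Or.inl rfl
    · exact h2
    · rcases h2 with rfl | rfl | ⟨hv', hw, h'⟩
      · exact absurd rfl hv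
      · exact Or.inr (Or.inr ⟨hu, hv, h⟩)
      · exact Or.inr (Or.inr ⟨hu, hw, F'.le_trans _ _ _ h h'⟩)
  anc_chain := by
    rintro u v w (rfl | rfl | ⟨hu, hw, h⟩) h2
    · exact Or.inl (Or.inl rfl)
    · -- u = w, le v w
      rcases h2 with rfl | rfl | ⟨hv, hw, h'⟩
      · exact Or.inr (Or.inl rfl)
      · exact Or.inl (Or.inr (Or.inl rfl))
      · exact Or.inr (Or.inr (Or.inr ⟨hv, hw, h'⟩))
    · rcases h2 with rfl | rfl | ⟨hv, hw', h'⟩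
      · exact Or.inr (Or.inl rfl)
      · exact Or.inl (Or.inr (Or.inr ⟨hu, hw, h⟩))
      · rcases F'.anc_chain _ _ _ h h' with h3 | h3
        · exact Or.inl (Or.inr (Or.inr ⟨hu, hv, h3⟩))
        · exact Or.inr (Or.inr (Or.inr ⟨hv, hu, h3⟩))

lemma addRoot_supports (r : V) (F' : RootedForest ({v : V | v ≠ r} : Set V))
    (hF' : F'.Supports (G.induce {v : V | v ≠ r})) : (addRoot r F').Supports G := by
  intro u v huv
  by_cases hu : u = r
  · exact Or.inl (Or.inl hu)
  by_cases hv : v = r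
  · exact Or.inr (Or.inl hv)
  rcases hF' ⟨u, hu⟩ ⟨v, hv⟩ huv with h | h
  · exact Or.inl (Or.inr (Or.inr ⟨hu, hv, h⟩))
  · exact Or.inr (Or.inr (Or.inr ⟨hv, hu, h⟩))

lemma addRoot_vheight_root [Finite V] (r : V) (F' : RootedForest ({v : V | v ≠ r} : Set V)) :
    (addRoot r F').vheight r = 1 := by
  have : {y // (addRoot r F').le y r} ≃ Unit :=
    { toFun := fun _ => ()
      invFun := fun _ => ⟨r, Or.inl rfl⟩
      left_inv := by
        rintro ⟨y, rfl | rfl | ⟨hy, hr, h⟩⟩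
        · rfl
        · rfl
        · exact absurd rfl hr
      right_inv := fun _ => rfl }
  rw [RootedForest.vheight, Nat.card_congr this]
  simp

lemma addRoot_vheight [Finite V] (r : V) (F' : RootedForest ({v : V | v ≠ r} : Set V))
    (x : V) (hx : x ≠ r) :
    (addRoot r F').vheight x = F'.vheight ⟨x, hx⟩ + 1 := by
  have hle : ∀ y, (addRoot r F').le y x → y ≠ r → ∃ hy : y ≠ r, F'.le ⟨y, hy⟩ ⟨x, hx⟩ := by
    rintro y (rfl | rfl | ⟨hy, hx', h⟩) hyr
    · exact absurd rfl hyr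
    · exact ⟨hyr, F'.le_refl _⟩
    · exact ⟨hy, h⟩
  have e : {y // (addRoot r F').le y x} ≃ Option {z // F'.le z ⟨x, hx⟩} := by
    classical
    exact
    { toFun := fun y => if hy : y.1 = r then none else
        some ⟨⟨y.1, hy⟩, (hle y.1 y.2 hy).choose_spec⟩
      invFun := fun z => match z with
        | none => ⟨r, Or.inl rfl⟩
        | some z => ⟨z.1.1, Or.inr (Or.inr ⟨z.1.2, hx, z.2⟩)⟩
      left_inv := by
        rintro ⟨y, hy⟩
        by_cases h : y = r
        · subst h; simp
        · simp [h]
      right_inv := by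
        rintro (_ | z)
        · simp
        · have h2 : (z.1.1 : V) ≠ r := z.1.2
          simp only [h2, dif_neg, not_false_iff] }
  rw [RootedForest.vheight, Nat.card_congr e]
  have : Finite {z // F'.le z ⟨x, hx⟩} := Subtype.finite
  rw [nat_card_option, RootedForest.vheight]

end AddRoot
/-- The trivial forest with no order relations besides equality. -/
def eqForest (V : Type*) : RootedForest V :=
  ⟨Eq, fun _ => rfl, fun _ _ h _ => h, fun _ _ _ h1 h2 => h1.trans h2,
    fun _ _ _ h1 h2 => Or.inl (h1.trans h2.symm)⟩

lemma forest_of_centered {α : Type*} : ∀ (p : ℕ) {V : Type*} [Finite V] (G : SimpleGraph V)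
    (c : V → α), IsCenteredColoring G c → (Set.range c).ncard ≤ p →
    ∃ F : RootedForest V, RootedForest.Supports G F ∧ ∀ x, F.vheight x ≤ p := by
  intro p
  induction p with
  | zero =>
    intro V _ G c hc hp
    have hVE : IsEmpty V := by
      by_contra h
      rw [not_isEmpty_iff] at h
      obtain ⟨v⟩ := h
      have hmem : c v ∈ Set.range c := ⟨v, rfl⟩
      have hpos : 0 < (Set.range c).ncard :=
        (Set.ncard_pos (Set.finite_range c)).mpr ⟨_, hmem⟩
      omega
    exact ⟨eqForest V, fun u => (hVE.false u).elim, fun x => (hVE.false x).elim⟩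
  | succ p ih =>
    intro V _ G c hc hp
    classical
    have key : ∀ K : G.ConnectedComponent, ∃ FK : RootedForest K.supp,
        RootedForest.Supports (G.induce K.supp) FK ∧ ∀ x, FK.vheight x ≤ p + 1 := by
      intro K
      set T := K.supp with hT
      have hTconn := connected_induce_supp G K
      have hTne : T.Nonempty := Set.nonempty_coe_sort.mp hTconn.nonempty
      have hcT : IsCenteredColoring (G.induce T) (fun v => c v.1) := centered_induce G c hc T
      obtain ⟨a, r, hr, hru⟩ := hc T hTne hTconn
      set W : Set (↥T) := {v | v ≠ r} with hW
      have hcW : IsCenteredColoring ((G.induce T).induce W) (fun v => c v.1.1) :=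
        centered_induce (G.induce T) _ hcT W
      have hrange : (Set.range (fun v : W => c v.1.1)).ncard ≤ p := by
        have hsub : Set.range (fun v : W => c v.1.1) ⊆ Set.range c \ {a} := by
          rintro _ ⟨w, rfl⟩
          refine ⟨⟨w.1.1, rfl⟩, ?_⟩
          intro hwa
          exact w.2 (hru w.1 hwa)
        have hmem : a ∈ Set.range c := ⟨r.1, hr⟩
        have h1 : (Set.range (fun v : W => c v.1.1)).ncard ≤ (Set.range c \ {a}).ncard :=
          Set.ncard_le_ncard hsub (Set.finite_range c).diff
        have h2 : (Set.range c \ {a}).ncard = (Set.range c).ncard - 1 :=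
          Set.ncard_diff_singleton_of_mem hmem
        have h3 : 0 < (Set.range c).ncard :=
          (Set.ncard_pos (Set.finite_range c)).mpr ⟨_, hmem⟩
        omega
      obtain ⟨F', hF'sup, hF'h⟩ := ih ((G.induce T).induce W) (fun v => c v.1.1) hcW hrange
      refine ⟨addRoot r F', addRoot_supports r F' hF'sup, ?_⟩
      intro x
      by_cases hx : x = r
      · subst hx
        rw [addRoot_vheight_root]
        omega
      · rw [addRoot_vheight r F' x hx]
        have := hF'h ⟨x, hx⟩
        omega
    choose FK hFKsup hFKh using key
    refine ⟨glueForest FK, glueForest_supports FK hFKsup, ?_⟩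
    intro x
    rw [glueForest_vheight]
    exact hFKh _ _

theorem treeDepth_le_of_centered_coloring
    {V : Type*} [Fintype V] (G : SimpleGraph V) (hG : G.Connected) (p : ℕ)
    (c : V → Fin p) (hc : IsCenteredColoring G c) :
    treeDepth G ≤ p ∧
    ∃ F : RootedForest V, RootedForest.Supports G F ∧ F.height ≤ p := by
  have hp' : (Set.range c).ncard ≤ p := by
    have := Set.ncard_le_ncard (Set.subset_univ (Set.range c)) Set.finite_univ
    simpa [Set.ncard_univ] using this
  obtain ⟨F, hsup, hh⟩ := forest_of_centered p G c hc hp'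
  have hheight : F.height ≤ p := by
    rw [RootedForest.height]
    cases isEmpty_or_nonempty V with
    | inl h => rw [ciSup_of_empty]; exact Nat.zero_le p
    | inr h => exact ciSup_le hh
  exact ⟨Nat.sInf_le ⟨F, hsup, hheight⟩, F, hsup, hheight⟩
end
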